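/- Let u, x ∈ ℝⁿ, c ∈ ℝ, g ∈ ℝ^p, let J be a real n×p matrix, and let Σ be a p×p real symmetric positive definite matrix, with Jᵀx ≠ 0. Define z(δ) = (δ·uᵀx + c) / √(1 + (π/8)·(δ·Jᵀx + g)ᵀ Σ (δ·Jᵀx + g)) for δ ∈ ℝ. Then, as δ → ∞, |z(δ)| converges to the finite limit |uᵀx| / √((π/8)·(Jᵀx)ᵀΣ(Jᵀx)). (Limit part of Theorem 2.3, all-layer approximation: on the terminal linear region, f_μ(δx) = δ·uᵀx + c and the gradient is d(δx) = δ(Jᵀx + δ⁻¹·∇_θ c), so |z(δx)| tends to a constant.) -/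

import Mathlib

open Matrix Filter

/-- Limit part of Theorem 2.3 (all-layer approximation): on the terminal
linear region, `f_μ(δx) = δ·uᵀx + c` with gradient `δ·Jᵀx + g`, and the
softened logit `|z(δ)|` converges, as `δ → ∞`, to
`|uᵀx| / √((π/8)·(Jᵀx)ᵀΣ(Jᵀx))`. -/
theorem abs_softened_logit_tendsto_allLayer {n p : ℕ}
    (u x : Fin n → ℝ) (c : ℝ) (g : Fin p → ℝ)
    (J : Matrix (Fin n) (Fin p) ℝ)
    (S : Matrix (Fin p) (Fin p) ℝ) (hS : S.PosDef)
    (hJx : Jᵀ *ᵥ x ≠ 0) :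
    Tendsto
      (fun δ : ℝ =>
        |(δ * (u ⬝ᵥ x) + c) /
          Real.sqrt (1 + Real.pi / 8 *
            ((δ • (Jᵀ *ᵥ x) + g) ⬝ᵥ (S *ᵥ (δ • (Jᵀ *ᵥ x) + g))))|)
      atTop
      (nhds (|u ⬝ᵥ x| /
        Real.sqrt (Real.pi / 8 * ((Jᵀ *ᵥ x) ⬝ᵥ (S *ᵥ (Jᵀ *ᵥ x)))))) := by
  set v : Fin p → ℝ := Jᵀ *ᵥ x with hv
  set A : ℝ := u ⬝ᵥ x with hA
  have hQ : 0 < v ⬝ᵥ (S *ᵥ v) := by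
    have := hS.re_dotProduct_pos (x := v) hJx
    simpa using this
  set f : ℝ → ℝ := fun t =>
    |A + c * t| / Real.sqrt (t ^ 2 + Real.pi / 8 *
      ((v + t • g) ⬝ᵥ (S *ᵥ (v + t • g)))) with hf
  have hfc : ContinuousAt f 0 := by
    have h1 : Continuous fun t : ℝ => v + t • g := by continuity
    have hcQ : Continuous fun t : ℝ =>
        (v + t • g) ⬝ᵥ (S *ᵥ (v + t • g)) :=
      h1.dotProduct ((continuous_const (y := S)).matrix_mulVec h1)
    have hnum : Continuous fun t : ℝ => |A + c * t| := by continuity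
    have hden : Continuous fun t : ℝ =>
        Real.sqrt (t ^ 2 + Real.pi / 8 *
          ((v + t • g) ⬝ᵥ (S *ᵥ (v + t • g)))) :=
      Real.continuous_sqrt.comp (by continuity)
    apply ContinuousAt.div hnum.continuousAt hden.continuousAt
    have : (0:ℝ) < (0:ℝ) ^ 2 + Real.pi / 8 *
        ((v + (0:ℝ) • g) ⬝ᵥ (S *ᵥ (v + (0:ℝ) • g))) := by
      simp only [zero_smul, add_zero, zero_pow, zero_add]
      positivity
    exact (Real.sqrt_pos.mpr this).ne'
  have hlim : Tendsto (fun δ : ℝ => f δ⁻¹) atTop (nhds (f 0)) :=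
    hfc.tendsto.comp tendsto_inv_atTop_zero
  have hf0 : f 0 = |A| / Real.sqrt (Real.pi / 8 * (v ⬝ᵥ (S *ᵥ v))) := by
    rw [hf]; norm_num
  rw [hf0] at hlim
  refine hlim.congr' ?_
  filter_upwards [eventually_gt_atTop (0:ℝ)] with δ hδ
  have hδ0 : δ ≠ 0 := hδ.ne'
  have key : δ • v + g = δ • (v + δ⁻¹ • g) := by
    rw [smul_add, smul_smul, mul_inv_cancel₀ hδ0, one_smul]
  have hQeq : (δ • v + g) ⬝ᵥ (S *ᵥ (δ • v + g))
      = δ ^ 2 * ((v + δ⁻¹ • g) ⬝ᵥ (S *ᵥ (v + δ⁻¹ • g))) := by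
    rw [key, Matrix.mulVec_smul, smul_dotProduct, dotProduct_smul,
      smul_eq_mul, smul_eq_mul]
    ring
  have hden : 1 + Real.pi / 8 * ((δ • v + g) ⬝ᵥ (S *ᵥ (δ • v + g)))
      = δ ^ 2 * ((δ⁻¹) ^ 2 + Real.pi / 8 *
        ((v + δ⁻¹ • g) ⬝ᵥ (S *ᵥ (v + δ⁻¹ • g)))) := by
    rw [hQeq]
    field_simp
  have hsqrt : Real.sqrt (1 + Real.pi / 8 *
      ((δ • v + g) ⬝ᵥ (S *ᵥ (δ • v + g))))
      = δ * Real.sqrt ((δ⁻¹) ^ 2 + Real.pi / 8 *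
        ((v + δ⁻¹ • g) ⬝ᵥ (S *ᵥ (v + δ⁻¹ • g)))) := by
    rw [hden, Real.sqrt_mul (sq_nonneg δ), Real.sqrt_sq hδ.le]
  have hnum : δ * A + c = δ * (A + c * δ⁻¹) := by
    field_simp
  show f δ⁻¹ = _
  rw [hf]
  simp only
  rw [abs_div, abs_of_nonneg (Real.sqrt_nonneg _), hsqrt, hnum, abs_mul,
    abs_of_pos hδ, mul_div_mul_left _ _ hδ0]
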